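/- Fix T ≥ 1, a real number ε > 0, n×n real matrices A₁,…,A_{T−1}, symmetric positive definite n×n matrices W₁,…,W_{T−1}, a symmetric positive definite n×n matrix P₀, symmetric positive semidefinite n×n matrices Θ₁,…,Θ_T, and positive reals γ₁,…,γ_T. Consider the feasible set F of tuples (P₁,…,P_T, Π₁,…,Π_T) of symmetric n×n matrices satisfying: Π_t ⪰ ε I for t = 1,…,T; P₁ ⪯ P₀; P_T = Π_T; P_{t+1} ⪯ A_t P_t A_tᵀ + W_t for t = 1,…,T−1; and [[P_t − Π_t, P_t A_tᵀ], [A_t P_t, W_t + A_t P_t A_tᵀ]] ⪰ 0 for t = 1,…,T−1. If F is nonempty, then the function J(P, Π) = Σ_{t=1}^T ( (1/2)·Tr(Θ_t P_t) − (γ_t/2)·log det Π_t ) attains its minimum on F. -/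

import Mathlib

open Matrix

variable {m : Type*} [Fintype m]

lemma isClosed_psd : IsClosed {M : Matrix m m ℝ | M.PosSemidef} := by
  have he : {M : Matrix m m ℝ | M.PosSemidef} =
      {M : Matrix m m ℝ | Mᴴ = M} ∩ ⋂ x : m → ℝ, {M | 0 ≤ star x ⬝ᵥ M *ᵥ x} := by
    ext M
    simp only [Set.mem_setOf_eq, Set.mem_inter_iff, Set.mem_iInter, Matrix.posSemidef_iff_dotProduct_mulVec,
      Matrix.IsHermitian]
  rw [he]
  refine IsClosed.inter (isClosed_eq continuous_id.matrix_conjTranspose continuous_id) ?_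
  refine isClosed_iInter fun x => ?_
  exact isClosed_le continuous_const
    ((continuous_const : Continuous fun _ : Matrix m m ℝ => star x).dotProduct
      (continuous_id.matrix_mulVec continuous_const))

lemma smul_one_posDef {n : ℕ} {ε : ℝ} (hε : 0 < ε) :
    (ε • (1 : Matrix (Fin n) (Fin n) ℝ)).PosDef := by
  have : (ε • (1 : Matrix (Fin n) (Fin n) ℝ)) = Matrix.diagonal (fun _ => ε) := by
    ext i j; by_cases h : i = j <;> simp [h, Matrix.one_apply, Matrix.diagonal]
  rw [this]
  exact Matrix.PosDef.diagonal (fun _ => hε)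

lemma entry_bound {X C : Matrix m m ℝ} (hX : X.PosSemidef) (hC : (C - X).PosSemidef)
    [DecidableEq m] (a b : m) : |X a b| ≤ C.trace := by
  have hdiag : ∀ i, 0 ≤ X i i := by
    intro i
    have := hX.dotProduct_mulVec_nonneg (Pi.single i 1)
    simpa [Matrix.mulVec_single, single_dotProduct] using this
  have hdiagC : ∀ i, X i i ≤ C i i := by
    intro i
    have := hC.dotProduct_mulVec_nonneg (Pi.single i 1)
    simpa [Matrix.mulVec_single, single_dotProduct, Matrix.sub_apply] using this
  have hCdiag : ∀ i, 0 ≤ C i i := fun i => le_trans (hdiag i) (hdiagC i)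
  have htr : ∀ i, C i i ≤ C.trace := by
    intro i
    rw [Matrix.trace]
    exact Finset.single_le_sum (fun j _ => hCdiag j) (Finset.mem_univ i)
  rcases eq_or_ne a b with rfl | hab
  · rw [abs_of_nonneg (hdiag a)]; exact le_trans (hdiagC a) (htr a)
  · have hsym : X b a = X a b := by
      have := congrFun (congrFun hX.1 a) b
      simpa [Matrix.conjTranspose_apply] using this
    have key : ∀ c : ℝ, 0 ≤ 1 * (X a a * 1) + c * (X b a * 1) + (1 * (X a b * c) + c * (X b b * c)) := by
      intro c
      have h := hX.dotProduct_mulVec_nonneg (Pi.single a 1 + Pi.single b c)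
      simpa only [star_trivial, Matrix.mulVec_add, dotProduct_add,
        add_dotProduct, Matrix.mulVec_single, single_dotProduct, Pi.smul_apply,
        op_smul_eq_mul, Matrix.col_apply] using h
    have h1 := key 1
    have h2 := key (-1)
    have hpair : C a a + C b b ≤ C.trace := by
      have hsub : ∑ i ∈ ({a, b} : Finset m), C i i ≤ ∑ i, C i i :=
        Finset.sum_le_sum_of_subset_of_nonneg (Finset.subset_univ _) (fun i _ _ => hCdiag i)
      rw [Finset.sum_pair hab] at hsub
      exact hsub
    rw [abs_le]
    constructor <;> [nlinarith [hdiagC a, hdiagC b]; nlinarith [hdiagC a, hdiagC b]]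


/-- Existence of an optimal solution to the covariance-scheduling max-det problem.
Times `t = 1, …, T` are indexed by `Fin T` (index `i` corresponds to time `i + 1`).
`PQ.1` is the tuple `(P₁, …, P_T)` and `PQ.2` is `(Π₁, …, Π_T)`. -/
theorem stmt11 {n : ℕ} (T : ℕ) (hT : 1 ≤ T) (ε : ℝ) (hε : 0 < ε)
    (A W : ℕ → Matrix (Fin n) (Fin n) ℝ)
    (hW : ∀ t, 1 ≤ t → t ≤ T - 1 → (W t).PosDef)
    (P₀ : Matrix (Fin n) (Fin n) ℝ) (hP₀ : P₀.PosDef)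
    (Θ : ℕ → Matrix (Fin n) (Fin n) ℝ)
    (hΘ : ∀ t, 1 ≤ t → t ≤ T → (Θ t).PosSemidef)
    (γ : ℕ → ℝ) (hγ : ∀ t, 1 ≤ t → t ≤ T → 0 < γ t)
    (F : Set ((Fin T → Matrix (Fin n) (Fin n) ℝ) × (Fin T → Matrix (Fin n) (Fin n) ℝ)))
    (hF : F = {PQ |
      (∀ i, (PQ.1 i).IsHermitian) ∧ (∀ i, (PQ.2 i).IsHermitian) ∧
      (∀ i, (PQ.2 i - ε • (1 : Matrix (Fin n) (Fin n) ℝ)).PosSemidef) ∧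
      (P₀ - PQ.1 ⟨0, hT⟩).PosSemidef ∧
      PQ.1 ⟨T - 1, by omega⟩ = PQ.2 ⟨T - 1, by omega⟩ ∧
      (∀ i : ℕ, ∀ h : i + 1 < T,
        (A (i + 1) * PQ.1 ⟨i, by omega⟩ * (A (i + 1))ᵀ + W (i + 1)
          - PQ.1 ⟨i + 1, h⟩).PosSemidef) ∧
      (∀ i : ℕ, ∀ h : i + 1 < T,
        (Matrix.fromBlocks
          (PQ.1 ⟨i, by omega⟩ - PQ.2 ⟨i, by omega⟩)
          (PQ.1 ⟨i, by omega⟩ * (A (i + 1))ᵀ)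
          (A (i + 1) * PQ.1 ⟨i, by omega⟩)
          (W (i + 1) + A (i + 1) * PQ.1 ⟨i, by omega⟩ * (A (i + 1))ᵀ)).PosSemidef)})
    (J : (Fin T → Matrix (Fin n) (Fin n) ℝ) × (Fin T → Matrix (Fin n) (Fin n) ℝ) → ℝ)
    (hJ : J = fun PQ => ∑ i : Fin T,
      ((1 / 2) * (Θ (i.val + 1) * PQ.1 i).trace
        - γ (i.val + 1) / 2 * Real.log (PQ.2 i).det))
    (hFne : F.Nonempty) :
    ∃ PQ ∈ F, ∀ PQ' ∈ F, J PQ ≤ J PQ' := by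
  classical
  -- ε-identity is positive definite
  have hεI : (ε • (1 : Matrix (Fin n) (Fin n) ℝ)).PosDef := smul_one_posDef hε
  -- continuity of coordinate projections
  have cP : ∀ i : Fin T, Continuous fun PQ : (Fin T → Matrix (Fin n) (Fin n) ℝ) ×
      (Fin T → Matrix (Fin n) (Fin n) ℝ) => PQ.1 i :=
    fun i => (continuous_apply i).comp continuous_fst
  have cQ : ∀ i : Fin T, Continuous fun PQ : (Fin T → Matrix (Fin n) (Fin n) ℝ) ×
      (Fin T → Matrix (Fin n) (Fin n) ℝ) => PQ.2 i :=
    fun i => (continuous_apply i).comp continuous_snd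
  -- closedness of F
  have hFclosed : IsClosed F := by
    rw [hF]
    simp only [Set.setOf_and]
    refine IsClosed.inter ?_ (IsClosed.inter ?_ (IsClosed.inter ?_ (IsClosed.inter ?_
      (IsClosed.inter ?_ (IsClosed.inter ?_ ?_)))))
    · rw [Set.setOf_forall]
      exact isClosed_iInter fun i => isClosed_eq (cP i).matrix_conjTranspose (cP i)
    · rw [Set.setOf_forall]
      exact isClosed_iInter fun i => isClosed_eq (cQ i).matrix_conjTranspose (cQ i)
    · rw [Set.setOf_forall]
      exact isClosed_iInter fun i => isClosed_psd.preimage ((cQ i).sub continuous_const)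
    · exact isClosed_psd.preimage (continuous_const.sub (cP _))
    · exact isClosed_eq (cP _) (cQ _)
    · rw [Set.setOf_forall]
      refine isClosed_iInter fun i => ?_
      rw [Set.setOf_forall]
      refine isClosed_iInter fun h => ?_
      exact isClosed_psd.preimage
        ((((continuous_const.matrix_mul (cP _)).matrix_mul continuous_const).add
          continuous_const).sub (cP _))
    · rw [Set.setOf_forall]
      refine isClosed_iInter fun i => ?_
      rw [Set.setOf_forall]
      refine isClosed_iInter fun h => ?_
      exact isClosed_psd.preimage
        (Continuous.matrix_fromBlocks ((cP _).sub (cQ _))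
          ((cP _).matrix_mul continuous_const)
          (continuous_const.matrix_mul (cP _))
          (continuous_const.add ((continuous_const.matrix_mul (cP _)).matrix_mul
            continuous_const)))
  -- recursive upper bound matrices
  set Bnd : ℕ → Matrix (Fin n) (Fin n) ℝ :=
    fun k => Nat.rec P₀ (fun k Bk => A (k + 1) * Bk * (A (k + 1))ᵀ + W (k + 1)) k with hBnd
  -- basic facts for members of F
  have hfacts : ∀ PQ ∈ F, ∀ i : Fin T,
      (PQ.1 i).PosSemidef ∧ (PQ.2 i).PosSemidef ∧
      (Bnd i.val - PQ.1 i).PosSemidef ∧ (Bnd i.val - PQ.2 i).PosSemidef := by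
    intro PQ hPQ
    rw [hF] at hPQ
    obtain ⟨hH1, hH2, hQε, hP0, hPT, hdyn, hblk⟩ := hPQ
    -- P i - Π i is PSD
    have hPQdiff : ∀ i : Fin T, (PQ.1 i - PQ.2 i).PosSemidef := by
      rintro ⟨iv, hi⟩
      rcases Nat.lt_or_ge (iv + 1) T with h | h
      · have hb := (hblk iv h).submatrix Sum.inl
        have he : ((Matrix.fromBlocks
            (PQ.1 ⟨iv, by omega⟩ - PQ.2 ⟨iv, by omega⟩)
            (PQ.1 ⟨iv, by omega⟩ * (A (iv + 1))ᵀ)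
            (A (iv + 1) * PQ.1 ⟨iv, by omega⟩)
            (W (iv + 1) + A (iv + 1) * PQ.1 ⟨iv, by omega⟩ * (A (iv + 1))ᵀ)).submatrix
            Sum.inl Sum.inl) = PQ.1 ⟨iv, hi⟩ - PQ.2 ⟨iv, hi⟩ := by
          ext a b; rfl
        rwa [he] at hb
      · have hiv : iv = T - 1 := by omega
        have : PQ.1 ⟨iv, hi⟩ = PQ.2 ⟨iv, hi⟩ := by
          subst hiv; exact hPT
        rw [this, sub_self]
        exact Matrix.PosSemidef.zero
    -- Π i is PSD (indeed ⪰ εI)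
    have hQpsd : ∀ i : Fin T, (PQ.2 i).PosSemidef := by
      intro i
      have := (hQε i).add hεI.posSemidef
      rwa [sub_add_cancel] at this
    -- P i is PSD
    have hPpsd : ∀ i : Fin T, (PQ.1 i).PosSemidef := by
      intro i
      have := (hPQdiff i).add (hQpsd i)
      rwa [sub_add_cancel] at this
    -- upper bound by induction
    have hub : ∀ k, ∀ hk : k < T, (Bnd k - PQ.1 ⟨k, hk⟩).PosSemidef := by
      intro k
      induction k with
      | zero => intro hk; exact hP0
      | succ k ih =>
        intro hk
        have hk' : k < T := by omega
        have hAB := (ih hk').mul_mul_conjTranspose_same (A (k + 1))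
        rw [Matrix.conjTranspose_eq_transpose_of_trivial] at hAB
        have hd := hdyn k hk
        have he : Bnd (k + 1) - PQ.1 ⟨k + 1, hk⟩ =
            (A (k + 1) * PQ.1 ⟨k, by omega⟩ * (A (k + 1))ᵀ + W (k + 1)
              - PQ.1 ⟨k + 1, hk⟩) +
            A (k + 1) * (Bnd k - PQ.1 ⟨k, hk'⟩) * (A (k + 1))ᵀ := by
          show A (k + 1) * Bnd k * (A (k + 1))ᵀ + W (k + 1) - PQ.1 ⟨k + 1, hk⟩ = _
          noncomm_ring
        rw [he]
        exact hd.add hAB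
    rintro ⟨iv, hi⟩
    refine ⟨hPpsd _, hQpsd _, hub iv hi, ?_⟩
    have := (hub iv hi).add (hPQdiff ⟨iv, hi⟩)
    rwa [sub_add_sub_cancel] at this
  -- the box
  set c : Fin T → ℝ := fun i => (Bnd i.val).trace with hc
  set K : Set ((Fin T → Matrix (Fin n) (Fin n) ℝ) × (Fin T → Matrix (Fin n) (Fin n) ℝ)) :=
    (Set.univ.pi fun i : Fin T => Set.univ.pi fun _ : Fin n => Set.univ.pi fun _ : Fin n =>
      Set.Icc (-(c i)) (c i)) ×ˢ
    (Set.univ.pi fun i : Fin T => Set.univ.pi fun _ : Fin n => Set.univ.pi fun _ : Fin n =>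
      Set.Icc (-(c i)) (c i)) with hK
  have hKcomp : IsCompact K :=
    (isCompact_univ_pi fun i => isCompact_univ_pi fun _ => isCompact_univ_pi fun _ =>
      isCompact_Icc).prod
    (isCompact_univ_pi fun i => isCompact_univ_pi fun _ => isCompact_univ_pi fun _ =>
      isCompact_Icc)
  have hFK : F ⊆ K := by
    intro PQ hPQ
    obtain hfa := hfacts PQ hPQ
    constructor
    · intro i _
      intro a _
      intro b _
      have := entry_bound (hfa i).1 (hfa i).2.2.1 a b
      exact ⟨neg_le_of_abs_le this, le_of_abs_le this⟩
    · intro i _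
      intro a _
      intro b _
      have := entry_bound (hfa i).2.1 (hfa i).2.2.2 a b
      exact ⟨neg_le_of_abs_le this, le_of_abs_le this⟩
  have hFcomp : IsCompact F := hKcomp.of_isClosed_subset hFclosed hFK
  -- continuity of J on F
  have hJcont : ContinuousOn J F := by
    rw [hJ]
    refine continuousOn_finset_sum _ fun i _ => ContinuousOn.sub ?_ ?_
    · exact (continuous_const.mul ((continuous_const.matrix_mul (cP i)).matrix_trace)).continuousOn
    · refine ContinuousOn.mul continuousOn_const ?_
      intro PQ hPQ
      have hdet : (PQ.2 i).det ≠ 0 := by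
        rw [hF] at hPQ
        have hQε := hPQ.2.2.1 i
        have : (PQ.2 i).PosDef := by
          have := hεI.add_posSemidef hQε
          rwa [add_sub_cancel] at this
        exact this.det_pos.ne'
      have h1 : ContinuousAt (fun x : (Fin T → Matrix (Fin n) (Fin n) ℝ) ×
          (Fin T → Matrix (Fin n) (Fin n) ℝ) => (x.2 i).det) PQ :=
        ((cQ i).matrix_det).continuousAt
      exact (ContinuousAt.comp (x := PQ) (f := fun x : (Fin T → Matrix (Fin n) (Fin n) ℝ) ×
          (Fin T → Matrix (Fin n) (Fin n) ℝ) => (x.2 i).det) (Real.continuousAt_log hdet) h1).continuousWithinAt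
  obtain ⟨PQ, hPQF, hmin⟩ := hFcomp.exists_isMinOn hFne hJcont
  exact ⟨PQ, hPQF, fun PQ' h' => hmin h'⟩
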